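/- Let M be an additive commutative group, A ∈ M, and let b_d, …, b_0 be bits with k = Σ_{0 ≤ i ≤ d} b_i·2^i. Define x, y ∈ M by x = 0, y = A, and for i = d down to 0: if b_i = 1 then simultaneously x ← x + y and y ← 2y; otherwise y ← y + x and x ← 2x. Then after processing all bits, x = k·A (and y = x + A throughout). -/
import Mathlib


/-- State of the Montgomery ladder for scalar multiplication after `j`
iterations: starting from `(x, y) = (0, A)`, iteration `j` (which processes bit
`d - j`, i.e. bits are processed from `i = d` down to `0`) simultaneously
updates `x ← x + y`, `y ← 2y` when the bit is `1`, and `y ← y + x`, `x ← 2x`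
otherwise. -/
def montLadder {M : Type*} [AddCommGroup M] (A : M) (b : ℕ → Bool) (d : ℕ) :
    ℕ → M × M
  | 0 => (0, A)
  | j + 1 =>
    let s := montLadder A b d j
    if b (d - j) then (s.1 + s.2, s.2 + s.2) else (s.1 + s.1, s.2 + s.1)

def montVal (b : ℕ → Bool) (d j : ℕ) : ℕ :=
  ∑ i ∈ Finset.range j, (if b (d - i) then 2 ^ (j - 1 - i) else 0)

lemma montVal_succ (b : ℕ → Bool) (d j : ℕ) :
    montVal b d (j + 1) = 2 * montVal b d j + (if b (d - j) then 1 else 0) := by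
  unfold montVal
  rw [Finset.sum_range_succ, Finset.mul_sum]
  congr 1
  · apply Finset.sum_congr rfl
    intro i hi
    rw [Finset.mem_range] at hi
    split
    · rw [show j + 1 - 1 - i = (j - 1 - i) + 1 from by omega, pow_succ]; ring
    · simp
  · simp

lemma montLadder_inv {M : Type*} [AddCommGroup M] (A : M) (b : ℕ → Bool) (d j : ℕ) :
    (montLadder A b d j).1 = montVal b d j • A ∧
      (montLadder A b d j).2 = (montLadder A b d j).1 + A := by
  induction j with
  | zero => simp [montLadder, montVal]
  | succ j ih =>
    obtain ⟨h1, h2⟩ := ih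
    rw [montVal_succ]
    refine ⟨?_, ?_⟩ <;> simp only [montLadder] <;> split <;>
      simp_all [add_smul, two_mul] <;> abel


/-- after processing the bits `b d, …, b 0` of `k`, the Montgomery
ladder for scalar multiplication computes `x = k • A`, with `y = x + A`
throughout. -/
theorem montLadder_correct {M : Type*} [AddCommGroup M] (A : M) (d : ℕ)
    (b : ℕ → Bool) (k : ℕ)
    (hk : k = ∑ i ∈ Finset.range (d + 1), (if b i then 2 ^ i else 0)) :
    (montLadder A b d (d + 1)).1 = k • A ∧
      ∀ j ≤ d + 1, (montLadder A b d j).2 = (montLadder A b d j).1 + A := by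
  refine ⟨?_, fun j _ => (montLadder_inv A b d j).2⟩
  rw [(montLadder_inv A b d (d + 1)).1, hk]
  congr 1
  unfold montVal
  rw [← Finset.sum_range_reflect (fun i => if b i then 2 ^ i else 0) (d + 1)]
  apply Finset.sum_congr rfl
  intro i hi
  rw [Finset.mem_range] at hi
  have h1 : d + 1 - 1 - i = d - i := by omega
  simp [h1]
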